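/- Let Ω ⊂ ℝ³ be a measurable set of finite measure, T > 0, β > 0, and let f : (0,T) × Ω → [0,∞) be measurable with M := ess sup_{t ∈ (0,T)} ‖f(t,·)‖_{L⁴(Ω)} < ∞ and N := ∫₀ᵀ ‖f(t,·)‖_{L^{3β}(Ω)}^β dt < ∞. Then f ∈ L^{β + 8/3}((0,T) × Ω) and ∫₀ᵀ ∫_Ω f^{β+8/3} dx dt ≤ M^{8/3} · N. -/

import Mathlib

open MeasureTheory Set

/-- Mixed-norm interpolation yielding the uniform integrability exponent
`p_β = β + 8/3` for the temperature: from the `L^∞(0,T;L⁴)` bound `M` and the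
`L^β(0,T;L^{3β})` bound `N` one gets `∫∫ f^{β+8/3} ≤ M^{8/3} N`. -/
theorem stmt10 (Ω : Set (Fin 3 → ℝ)) (hΩ : MeasurableSet Ω)
    (hfin : volume Ω < ⊤) (T β : ℝ) (hT : 0 < T) (hβ : 0 < β)
    (f : ℝ → (Fin 3 → ℝ) → ℝ) (hf : Measurable (Function.uncurry f))
    (hnn : ∀ t x, 0 ≤ f t x) (M N : ENNReal)
    (hM : M = essSup
        (fun t => (∫⁻ x in Ω, ENNReal.ofReal (f t x) ^ (4:ℝ)) ^ (1/4 : ℝ))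
        (volume.restrict (Ioo 0 T)))
    (hM' : M < ⊤)
    (hN : N = ∫⁻ t in Ioo 0 T,
        (∫⁻ x in Ω, ENNReal.ofReal (f t x) ^ (3 * β)) ^ (1/3 : ℝ))
    (hN' : N < ⊤) :
    (∫⁻ t in Ioo 0 T, ∫⁻ x in Ω, ENNReal.ofReal (f t x) ^ (β + 8/3)) < ⊤ ∧
    ∫⁻ t in Ioo 0 T, ∫⁻ x in Ω, ENNReal.ofReal (f t x) ^ (β + 8/3)
      ≤ M ^ (8/3 : ℝ) * N := by
  set g : ℝ → (Fin 3 → ℝ) → ENNReal := fun t x => ENNReal.ofReal (f t x) with hg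
  -- a.e. bound from the essSup
  have hae : ∀ᵐ t ∂(volume.restrict (Ioo 0 T)),
      (∫⁻ x in Ω, g t x ^ (4:ℝ)) ^ (1/4 : ℝ) ≤ M := by
    rw [hM]; exact ENNReal.ae_le_essSup _
  have key : ∀ᵐ t ∂(volume.restrict (Ioo 0 T)),
      (∫⁻ x in Ω, g t x ^ (β + 8/3)) ≤
        M ^ (8/3 : ℝ) * (∫⁻ x in Ω, g t x ^ (3 * β)) ^ (1/3 : ℝ) := by
    filter_upwards [hae] with t ht
    have hmeas : Measurable (g t) := by
      have : Measurable (f t) := hf.of_uncurry_left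
      exact this.ennreal_ofReal
    have hconj : (3 : ℝ).HolderConjugate (3/2) := by
      constructor <;> norm_num
    have holder := ENNReal.lintegral_mul_le_Lp_mul_Lq
      (volume.restrict Ω) hconj
      (f := fun x => g t x ^ β) (g := fun x => g t x ^ (8/3 : ℝ))
      ((hmeas.pow_const _).aemeasurable) ((hmeas.pow_const _).aemeasurable)
    have e1 : ∀ x, ((fun x => g t x ^ β) * fun x => g t x ^ (8/3 : ℝ)) x
        = g t x ^ (β + 8/3) := by
      intro x
      simp only [Pi.mul_apply]
      rw [ENNReal.rpow_add_of_nonneg _ _ hβ.le (by norm_num)]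
    have e2 : ∀ x, (g t x ^ β) ^ (3:ℝ) = g t x ^ (3 * β) := by
      intro x; rw [← ENNReal.rpow_mul, mul_comm]
    have e3 : ∀ x, (g t x ^ (8/3:ℝ)) ^ (3/2:ℝ) = g t x ^ (4:ℝ) := by
      intro x; rw [← ENNReal.rpow_mul]; norm_num
    simp only [e1, e2, e3] at holder
    refine holder.trans ?_
    rw [mul_comm]
    gcongr
    calc (∫⁻ x in Ω, g t x ^ (4:ℝ)) ^ (1/(3/2) : ℝ)
        = ((∫⁻ x in Ω, g t x ^ (4:ℝ)) ^ (1/4 : ℝ)) ^ (8/3 : ℝ) := by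
          rw [← ENNReal.rpow_mul]; norm_num
      _ ≤ M ^ (8/3 : ℝ) := by gcongr
  have hbound : ∫⁻ t in Ioo 0 T, ∫⁻ x in Ω, g t x ^ (β + 8/3)
      ≤ M ^ (8/3 : ℝ) * N := by
    calc ∫⁻ t in Ioo 0 T, ∫⁻ x in Ω, g t x ^ (β + 8/3)
        ≤ ∫⁻ t in Ioo 0 T,
            M ^ (8/3 : ℝ) * (∫⁻ x in Ω, g t x ^ (3 * β)) ^ (1/3 : ℝ) :=
          lintegral_mono_ae key
      _ = M ^ (8/3 : ℝ) * N := by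
          rw [hN, lintegral_const_mul']
          exact ENNReal.rpow_ne_top_of_nonneg (by norm_num) hM'.ne
  refine ⟨hbound.trans_lt ?_, hbound⟩
  exact ENNReal.mul_lt_top (ENNReal.rpow_lt_top_of_nonneg (by norm_num) hM'.ne) hN'
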